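/- arXiv:2102.05513 — 2 statements merged into one kernel-verified Lean document; each statement's English description precedes it below -/
import Mathlib

section
/- Let d ≥ 1 and z, w, u ∈ ℝ^d with |u| = 1 and u·z = 0. Suppose there exists τ > 0 and r > 0 with |z - τw| ≤ r, and suppose |z| ≥ 2r and |w| ≤ M. Then |u·w| ≤ 2rM/|z|. -/
/-- Quantitative core of the Shooting Lemma: if the relative velocity `w`
(bounded by `M`) transports `z` into the ball of radius `r` around the origin
at some positive time, and `|z| ≥ 2r`, then the component of `w` orthogonal
to `z` is at most `2rM/|z|`. -/
theorem stmt_5 (d : ℕ) (hd : 1 ≤ d) (z w u : EuclideanSpace ℝ (Fin d)) (M r : ℝ)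
    (hu : ‖u‖ = 1) (huz : (inner ℝ u z : ℝ) = 0)
    (hr : 0 < r) (h : ∃ τ > (0 : ℝ), ‖z - τ • w‖ ≤ r)
    (hz : 2 * r ≤ ‖z‖) (hw : ‖w‖ ≤ M) :
    |(inner ℝ u w : ℝ)| ≤ 2 * r * M / ‖z‖ := by
  obtain ⟨τ, hτ, hτw⟩ := h
  have hzpos : (0 : ℝ) < ‖z‖ := lt_of_lt_of_le (by linarith) hz
  have hM : 0 ≤ M := le_trans (norm_nonneg w) hw
  -- key: τ * |inner u w| ≤ r
  have hkey : τ * |(inner ℝ u w : ℝ)| ≤ r := by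
    have : (inner ℝ u (z - τ • w) : ℝ) = - (τ * inner ℝ u w) := by
      rw [inner_sub_right, inner_smul_right, huz]; ring
    have habs : |(inner ℝ u (z - τ • w) : ℝ)| ≤ r := by
      calc |(inner ℝ u (z - τ • w) : ℝ)| ≤ ‖u‖ * ‖z - τ • w‖ := abs_real_inner_le_norm u _
        _ ≤ r := by rw [hu, one_mul]; exact hτw
    rw [this, abs_neg, abs_mul, abs_of_pos hτ] at habs
    exact habs
  -- key2: ‖z‖ - r ≤ τ * ‖w‖
  have hkey2 : ‖z‖ - r ≤ τ * ‖w‖ := by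
    have := norm_sub_norm_le z (τ • w)
    rw [norm_smul, Real.norm_eq_abs, abs_of_pos hτ] at this
    linarith
  have hhalf : ‖z‖ / 2 ≤ τ * ‖w‖ := by linarith
  rw [le_div_iff₀ hzpos]
  have h1 : |(inner ℝ u w : ℝ)| * (‖z‖ / 2) ≤ |(inner ℝ u w : ℝ)| * (τ * ‖w‖) :=
    mul_le_mul_of_nonneg_left hhalf (abs_nonneg _)
  have h2 : |(inner ℝ u w : ℝ)| * (τ * ‖w‖) ≤ r * ‖w‖ := by
    have := mul_le_mul_of_nonneg_right hkey (norm_nonneg w)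
    nlinarith [abs_nonneg (inner ℝ u w : ℝ), norm_nonneg w]
  have h3 : r * ‖w‖ ≤ r * M := mul_le_mul_of_nonneg_left hw hr.le
  nlinarith
end

section
/- For all real x with -1 ≤ x ≤ -2/3, one has π - √(3(x+1)) ≤ arccos(x) ≤ π - √(2(x+1)). -/
open Real

lemma cos_le_one_sub_sq_div_three {t : ℝ} (ht0 : 0 ≤ t) (ht1 : t ≤ 1) :
    Real.cos t ≤ 1 - t ^ 2 / 3 := by
  rcases eq_or_lt_of_le ht0 with h | h
  · simp [← h]
  · have h2 : 0 < t / 2 := by linarith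
    have h2' : t / 2 ≤ 1 := by linarith
    have hsin : t / 2 - (t / 2) ^ 3 / 4 < Real.sin (t / 2) := by
      have := Real.sin_gt_sub_cube h2; nlinarith [pow_pos h2 3]
    have hcos : Real.cos t = 1 - 2 * Real.sin (t / 2) ^ 2 := by
      have h1 := Real.cos_two_mul (t / 2)
      have h2 := Real.sin_sq_add_cos_sq (t / 2)
      have h3 : 2 * (t / 2) = t := by ring
      rw [h3] at h1
      nlinarith
    have hlb : t / 2 - (t / 2) ^ 3 / 4 ≥ 15 / 32 * t := by
      nlinarith [mul_nonneg (mul_nonneg ht0 (by linarith : (0:ℝ) ≤ 1 - t))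
        (by linarith : (0:ℝ) ≤ 1 + t)]
    have hpos : (0:ℝ) < 15 / 32 * t := by linarith
    have hsq : Real.sin (t / 2) ^ 2 ≥ (15 / 32 * t) ^ 2 := by nlinarith
    nlinarith

/-- Two-sided square-root estimate for `arccos` near `-1`:
for `-1 ≤ x ≤ -2/3`, `π - √(3(x+1)) ≤ arccos x ≤ π - √(2(x+1))`. -/
theorem stmt_7 (x : ℝ) (hx₁ : -1 ≤ x) (hx₂ : x ≤ -2/3) :
    Real.pi - Real.sqrt (3 * (x + 1)) ≤ Real.arccos x ∧
    Real.arccos x ≤ Real.pi - Real.sqrt (2 * (x + 1)) := by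
  have hx3 : x ≤ 1 := by linarith
  set t := Real.sqrt (3 * (x + 1)) with ht
  set s := Real.sqrt (2 * (x + 1)) with hs
  have ht0 : 0 ≤ t := Real.sqrt_nonneg _
  have hs0 : 0 ≤ s := Real.sqrt_nonneg _
  have htsq : t ^ 2 = 3 * (x + 1) := Real.sq_sqrt (by linarith)
  have hssq : s ^ 2 = 2 * (x + 1) := Real.sq_sqrt (by linarith)
  have ht1 : t ≤ 1 := by nlinarith
  have hs1 : s ≤ 1 := by nlinarith
  have hpi : (3:ℝ) < π := by linarith [Real.pi_gt_three]
  constructor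
  · -- lower bound: need x ≤ cos (π - t)
    have hct : Real.cos t ≤ -x := by
      have := cos_le_one_sub_sq_div_three ht0 ht1
      nlinarith
    have key : x ≤ Real.cos (π - t) := by
      rw [Real.cos_pi_sub]; linarith
    calc π - t = Real.arccos (Real.cos (π - t)) :=
          (Real.arccos_cos (by linarith) (by linarith)).symm
      _ ≤ Real.arccos x :=
          ((Real.strictAntiOn_arccos).le_iff_ge
            ⟨Real.neg_one_le_cos _, Real.cos_le_one _⟩ ⟨hx₁, hx3⟩).mpr key
  · -- upper bound: need cos (π - s) ≤ x
    have hcs : -x ≤ Real.cos s := by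
      have := Real.one_sub_sq_div_two_le_cos (x := s)
      nlinarith
    have key : Real.cos (π - s) ≤ x := by
      rw [Real.cos_pi_sub]; linarith
    calc Real.arccos x ≤ Real.arccos (Real.cos (π - s)) :=
          ((Real.strictAntiOn_arccos).le_iff_ge ⟨hx₁, hx3⟩
            ⟨Real.neg_one_le_cos _, Real.cos_le_one _⟩).mpr key
      _ = π - s := Real.arccos_cos (by linarith) (by linarith)
end
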